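/- Let Σ be a finite unital ring of size q ≥ 2, k ≥ 2 the duplication-window length. Let n, w, r ∈ ℕ satisfy 0 ≤ n − (1+r)k − w ≤ (k−1)(w+1). Then there exists an irreducible string x ∈ Σ^{n−kr} with wt_H(φ̄(x)) = w (so that D^r(x) ⊆ Σ^n). -/

import Mathlib

open scoped BigOperators Classical
open Filter

namespace TandemDup

variable {S : Type} [Fintype S] [DecidableEq S] [Ring S]

/-- A single tandem duplication with window length `k`:
`a = xyz` with `|y| = k` is mapped to `b = xyyz`. -/
def Dup (k : ℕ) (a b : List S) : Prop :=
  ∃ x y z : List S, y.length = k ∧ a = x ++ y ++ z ∧ b = x ++ y ++ y ++ z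

/-- `DescN k t x y` : `y` is a `t`-descendant of `x`. -/
def DescN (k : ℕ) : ℕ → List S → List S → Prop
  | 0, a, b => a = b
  | t + 1, a, b => ∃ c, DescN k t a c ∧ Dup k c b

/-- The set `D^t(x)` of `t`-descendants of `x`. -/
def DSet (k t : ℕ) (x : List S) : Set (List S) := {y | DescN k t x y}

/-- The descendant cone `D^*(x)`. -/
def DStar (k : ℕ) (x : List S) : Set (List S) := ⋃ t : ℕ, DSet k t x

/-- A string of length at least `k` is irreducible if it has no ancestor other than itself. -/
def Irred (k : ℕ) (x : List S) : Prop :=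
  k ≤ x.length ∧ ∀ z : List S, x ∈ DStar k z → z = x

/-- The duplication root `rt(y)`: an irreducible ancestor of `y` (unique, by the theory). -/
noncomputable def rt (k : ℕ) (y : List S) : List S :=
  if h : ∃ x : List S, Irred k x ∧ y ∈ DStar k x then h.choose else y

/-- The (non-anchor part of the) discrete derivative `φ̄(x)`. -/
def phiBar (k : ℕ) (x : List S) : List S :=
  (List.range (x.length - k)).map (fun i => x.getD (i + k) 0 - x.getD i 0)

/-- Hamming weight of a string: the number of its nonzero letters. -/
def wtH (l : List S) : ℕ := (l.filter (fun a => decide (a ≠ 0))).length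

/-- `w(x) := wt_H(φ̄(x))`. -/
def wgt (k : ℕ) (x : List S) : ℕ := wtH (phiBar k x)

/-- `r(x) := (|x| - |rt(x)|)/k`, the number of duplications taking `rt(x)` to `x`. -/
noncomputable def rr (k : ℕ) (x : List S) : ℕ := (x.length - (rt k x).length) / k

/-- The typicality condition on the weight `w`. -/
def wTypical (q k n w : ℕ) : Prop :=
  |(w : ℝ) - (((q : ℝ) - 1) / (q : ℝ)) * ((n : ℝ) - (k : ℝ))| < (n : ℝ) ^ ((3 : ℝ) / 4)

/-- The typicality condition on the number of duplications `r`. -/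
def rTypical (q k n r : ℕ) : Prop :=
  |(r : ℝ) - (((q : ℝ) - 1) / ((q : ℝ) * ((q : ℝ) ^ k - 1))) * ((n : ℝ) - (k : ℝ))|
    < 2 * (n : ℝ) ^ ((3 : ℝ) / 4)

/-- The typical set `typ^n`. -/
def typ (k n : ℕ) : Set (List S) :=
  {x | x.length = n ∧ wTypical (Fintype.card S) k n (wgt k x) ∧
    rTypical (Fintype.card S) k n (rr k x)}

/-- The uncertainty `N_t(m, C)`: the maximal size of `⋂ᵢ D^t(xᵢ)` over pairwise
distinct `x₁, …, x_m ∈ C`. -/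
noncomputable def Nt (k t m : ℕ) (C : Set (List S)) : ℕ :=
  sSup { N : ℕ | ∃ f : Fin m → List S, Function.Injective f ∧ (∀ i, f i ∈ C) ∧
    N = (⋂ i, DSet k t (f i)).ncard }

/-- `S̄_t(u₁, …, u_m) = ⋂ᵢ {v : v ≥ uᵢ, ‖v - uᵢ‖₁ = t}`. -/
def Sbar (w t : ℕ) {m : ℕ} (u : Fin m → (Fin (w + 1) → ℕ)) : Set (Fin (w + 1) → ℕ) :=
  ⋂ i, {v | u i ≤ v ∧ ∑ j, (v j - u i j) = t}

/-- `N̄_t(m, w, r)`. -/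
noncomputable def Nbar (t m w r : ℕ) : ℕ :=
  sSup { N : ℕ | ∃ u : Fin m → (Fin (w + 1) → ℕ), Function.Injective u ∧
    (∀ i, ∑ j, u i j = r) ∧ N = (Sbar w t u).ncard }

/-- The minimum supremum height `σ(m, w, r)`. -/
noncomputable def sigma (m w r : ℕ) : ℕ :=
  sInf { s : ℕ | ∃ u : Fin m → (Fin (w + 1) → ℕ), Function.Injective u ∧
    (∀ i, ∑ j, u i j = r) ∧ (∑ j, Finset.univ.sup fun i => u i j) = r + s }

/-- The lower-bounds set `A_r(u)`. -/
def lbs (w r : ℕ) (u : Fin (w + 1) → ℕ) : Set (Fin (w + 1) → ℕ) :=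
  {v | (∑ j, v j) = r ∧ v ≤ u}

/-- The maximal lower-bounds-set size `μ(w, r, s)`. -/
noncomputable def mu (w r s : ℕ) : ℕ :=
  sSup { N : ℕ | ∃ u : Fin (w + 1) → ℕ, (∑ j, u j) = r + s ∧ N = (lbs w r u).ncard }

/-- Twice the distance `d₁`, i.e. the `ℓ₁`-distance `‖u - v‖₁` on `ℕ^{w+1}`. -/
def l1dist {w : ℕ} (u v : Fin (w + 1) → ℕ) : ℕ :=
  ∑ j, ((u j - v j) + (v j - u j))

/-- `N̄_t(m, w, r, d)`. -/
noncomputable def NbarD (t m w r d : ℕ) : ℕ :=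
  sSup { N : ℕ | ∃ u : Fin m → (Fin (w + 1) → ℕ),
    (∀ i, ∑ j, u i j = r) ∧ (∀ i j, i ≠ j → 2 * d ≤ l1dist (u i) (u j)) ∧
    N = (Sbar w t u).ncard }

/-- `σ(m, w, r, d)`. -/
noncomputable def sigmaD (m w r d : ℕ) : ℕ :=
  sInf { s : ℕ | ∃ u : Fin m → (Fin (w + 1) → ℕ),
    (∀ i, ∑ j, u i j = r) ∧ (∀ i j, i ≠ j → 2 * d ≤ l1dist (u i) (u j)) ∧
    (∑ j, Finset.univ.sup fun i => u i j) = r + s }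

/-- `μ(w, r, s, d)`. -/
noncomputable def muD (w r s d : ℕ) : ℕ :=
  sSup { N : ℕ | ∃ u : Fin (w + 1) → ℕ, (∑ j, u j) = r + s ∧
    ∃ C : Set (Fin (w + 1) → ℕ), C ⊆ lbs w r u ∧
      (∀ v₁ ∈ C, ∀ v₂ ∈ C, v₁ ≠ v₂ → 2 * d ≤ l1dist v₁ v₂) ∧ N = C.ncard }

/-- The duplication distance `d(y₁, y₂)`. -/
noncomputable def distDup (k : ℕ) (y₁ y₂ : List S) : ℕ :=
  sInf {t : ℕ | (DSet k t y₁ ∩ DSet k t y₂).Nonempty}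

/-- `N^typ_t(m, n, d)`. -/
noncomputable def NtypD (k t m n d : ℕ) : ℕ :=
  sSup { N : ℕ | ∃ f : Fin m → List S, (∀ i, f i ∈ typ k n) ∧
    (∀ i j, i ≠ j → d ≤ distDup k (f i) (f j)) ∧
    N = (⋂ i, DSet k t (f i)).ncard }

/-- `A(ν, D, ω)`: the maximum size of a binary code of length `ν`, constant Hamming
weight `ω`, and minimum Hamming distance `D`. -/
noncomputable def Abin (ν D ω : ℕ) : ℕ :=
  sSup { N : ℕ | ∃ C : Set (Fin ν → ZMod 2), (∀ x ∈ C, hammingNorm x = ω) ∧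
    (∀ x ∈ C, ∀ y ∈ C, x ≠ y → D ≤ hammingDist x y) ∧ N = C.ncard }

/-- Zero-run-length representation: `ψ_x(y)` as a list, mapping `φ̄(y)` written as
`0^{u(1)} a₁ 0^{u(2)} … a_w 0^{u(w+1)}` (with the `aᵢ` nonzero) to
`(⌊u(1)/k⌋, …, ⌊u(w+1)/k⌋)`. -/
def psiList (k : ℕ) (y : List S) : List ℕ :=
  ((phiBar k y).splitOnP (fun a => decide (a ≠ 0))).map (fun run => run.length / k)

/-- `ψ_x(y)` as a vector in `ℕ^{w+1}`. -/
def psiVec (k w : ℕ) (y : List S) : Fin (w + 1) → ℕ := fun i => (psiList k y).getD i 0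

/-- `s = ⌈log_n m⌉`. -/
noncomputable def sExp (n m : ℕ) : ℕ := ⌈Real.logb n m⌉₊

/-- The indicator `δ(m, n)` of Theorem 17. -/
noncomputable def deltaTyp (q k n m : ℕ) : ℕ :=
  if ∀ r : ℕ, rTypical q k n r → Nat.choose (r + sExp n m) r < m then 1 else 0

/-- `s = ⌈log_n m⌉ + d - 1`. -/
noncomputable def sExpD (n m d : ℕ) : ℕ := sExp n m + (d - 1)

/-- The indicator `δ(m, n, d)` of Theorem 29. -/
noncomputable def deltaEcc (q k d n m : ℕ) : ℕ :=
  if ∀ r : ℕ, rTypical q k n r → Abin (r + sExpD n m d) (2 * d) (sExpD n m d) < m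
  then 1 else 0


def patL (a : ℕ) : ℕ → ℕ → List Bool
  | 0, z => List.replicate z false
  | w+1, z => List.replicate (min a z) false ++ true :: patL a w (z - min a z)

lemma patL_length (a : ℕ) : ∀ w z, (patL a w z).length = w + z := by
  intro w
  induction w with
  | zero => intro z; simp [patL]
  | succ w ih => intro z; simp [patL, ih]; omega

lemma patL_norun (a : ℕ) (ha : 1 ≤ a) : ∀ w z, z ≤ a * (w + 1) →
    ∀ i, i + (a + 1) ≤ w + z → ∃ t, t ≤ a ∧ (patL a w z).getD (i + t) false = true := by
  intro w
  induction w with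
  | zero => intro z hz i hi; omega
  | succ w ih =>
    intro z hz i hi
    set u := min a z with hu
    by_cases h : i ≤ u
    · refine ⟨u - i, by omega, ?_⟩
      have h1 : i + (u - i) = u := by omega
      have hlen : (List.replicate u (false : Bool)).length ≤ u := by simp
      simp only [patL, ← hu, h1]
      rw [List.getD_append_right _ _ _ _ hlen]
      simp
    · have hmul : a * (w + 1 + 1) = a * (w + 1) + a := by ring
      have hrec := ih (z - u) (by omega) (i - u - 1) (by
        have := patL_length a w (z - u); omega)
      obtain ⟨t, ht, hval⟩ := hrec
      refine ⟨t, ht, ?_⟩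
      have h1 : (List.replicate u (false : Bool)).length ≤ i + t := by simp; omega
      have h2 : i + t - u = (i - u - 1 + t) + 1 := by omega
      simp only [patL, ← hu]
      rw [List.getD_append_right _ _ _ _ h1]
      simp only [List.length_replicate, h2]
      simpa using hval

lemma wtH_patmap (a : ℕ) (h1 : (1:S) ≠ 0) : ∀ w z,
    wtH ((patL a w z).map (fun b => if b then (1:S) else 0)) = w := by
  intro w
  induction w with
  | zero => intro z; simp [patL, wtH, List.filter_replicate]
  | succ w ih =>
    intro z
    have := ih (z - min a z)
    simp only [wtH, patL, List.map_append, List.map_cons, List.map_replicate,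
      List.filter_append, List.filter_replicate, List.filter_cons, List.length_append,
      ne_eq, decide_not] at *
    simp [h1, this]

def liftF (k : ℕ) (d : ℕ → S) : ℕ → S
  | i => if _h : i < k ∨ k = 0 then 0 else liftF k d (i - k) + d (i - k)
  termination_by i => i
  decreasing_by simp only [not_or] at _h; omega

lemma liftF_add (k : ℕ) (hk : k ≠ 0) (d : ℕ → S) (i : ℕ) :
    liftF k d (i + k) = liftF k d i + d i := by
  rw [liftF]
  have h : ¬(i + k < k ∨ k = 0) := by omega
  rw [dif_neg h, Nat.add_sub_cancel]

theorem statement12 (hq : 2 ≤ Fintype.card S) (k : ℕ) (hk : 2 ≤ k)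
    (n w r : ℕ) (h₁ : (1 + r) * k + w ≤ n)
    (h₂ : n - (1 + r) * k - w ≤ (k - 1) * (w + 1)) :
    ∃ x : List S, x.length = n - k * r ∧ Irred k x ∧ wgt k x = w := by
  have h10 : (1 : S) ≠ 0 := by
    have : Nontrivial S := Fintype.one_lt_card_iff_nontrivial.mp (by omega)
    exact one_ne_zero
  have e1 : (1 + r) * k = k + k * r := by ring
  set N := n - k * r with hN
  set a := k - 1 with ha
  set z := N - k - w with hz
  have hNk : k + w + z = N := by omega
  have hzle : z ≤ a * (w + 1) := by
    have : n - (1 + r) * k - w = z := by omega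
    omega
  set p := patL a w z with hp
  have hpl : p.length = w + z := patL_length a w z
  set dval : ℕ → S := fun i => if p.getD i false then 1 else 0 with hdval
  set f := liftF k dval with hf
  set x : List S := (List.range N).map f with hxdef
  have hxlen : x.length = N := by simp [hxdef]
  have hxget : ∀ j, j < N → x.getD j 0 = f j := by
    intro j hj
    rw [List.getD_eq_getElem _ _ (by simpa [hxlen] using hj)]
    simp [hxdef]
  have hphi : phiBar k x = p.map (fun b => if b then (1:S) else 0) := by
    apply List.ext_getElem
    · simp [phiBar, hxlen, hpl]; omega
    · intro i hi1 hi2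
      have hiL : i < w + z := by simpa [hpl] using hi2
      have hlhs : (phiBar k x)[i] = x.getD (i + k) 0 - x.getD i 0 := by
        simp [phiBar]
      rw [hlhs, hxget (i + k) (by omega), hxget i (by omega)]
      rw [hf, liftF_add k (by omega) dval i]
      simp only [add_sub_cancel_left]
      rw [List.getElem_map]
      show (if p.getD i false then (1:S) else 0) = if p[i] then (1:S) else 0
      rw [List.getD_eq_getElem _ _ (by rw [hpl]; omega)]
  have hsq : ∀ (u y v : List S), y.length = k → x ≠ u ++ y ++ y ++ v := by
    intro u y v hy hxeq
    set i := u.length with hi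
    have hlen2 : N = i + k + k + v.length := by
      rw [← hxlen, hxeq]; simp [hy]; omega
    obtain ⟨t, htle, htrue⟩ := patL_norun a (by omega) w z hzle i (by omega)
    have htk : t < k := by omega
    have g1 : x.getD (i + t) 0 = y.getD t 0 := by
      rw [hxeq]
      rw [List.getD_append _ _ _ _ (by simp [hy]; try omega)]
      rw [List.getD_append _ _ _ _ (by simp [hy]; try omega)]
      rw [List.getD_append_right u y 0 (i + t) (by omega)]
      congr 1
      omega
    have g2 : x.getD (i + t + k) 0 = y.getD t 0 := by
      rw [hxeq]
      rw [List.getD_append _ _ _ _ (by simp [hy]; try omega)]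
      rw [List.getD_append_right _ _ _ _ (by simp [hy]; try omega)]
      congr 1
      simp [hy]
      omega
    have gf : f (i + t + k) = f (i + t) := by
      rw [← hxget _ (by omega), ← hxget _ (by omega), g1, g2]
    rw [hf, liftF_add k (by omega) dval (i + t)] at gf
    have : dval (i + t) = 0 := by
      have := congrArg (fun s => s - liftF k dval (i + t)) gf
      simpa using this
    rw [hdval] at this
    simp only [hp, htrue, if_true] at this
    exact h10 this
  refine ⟨x, hxlen, ⟨by omega, ?_⟩, ?_⟩
  · intro z' hz'
    obtain ⟨t, ht⟩ : ∃ t, DescN k t z' x := by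
      simpa [DStar, DSet, Set.mem_iUnion] using hz'
    cases t with
    | zero => exact ht
    | succ t =>
      exfalso
      obtain ⟨c, _, u, y, v, hy, _, hxeq⟩ := ht
      exact hsq u y v hy hxeq
  · rw [wgt, hphi]
    have := wtH_patmap a h10 w z
    rw [← hp] at this
    exact this

end TandemDup
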